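/- arXiv:1811.03247 — 2 statements merged into one kernel-verified Lean document; each statement's English description precedes it below -/
import Mathlib

section
/- The conductor of the subring A = ℂ[w, zw, z², z³] in ℂ[z,w] is the ideal generated by w and z², and there are ring isomorphisms ℂ[z,w]/𝔠 ≅ ℂ[z]/(z²) and A/𝔠 ≅ ℂ. -/
open MvPolynomial

/-- The subalgebra `A = ℂ[w, zw, z², z³]` of `ℂ[z,w]` (with `z = X 0`, `w = X 1`). -/
noncomputable def Awz : Subalgebra ℂ (MvPolynomial (Fin 2) ℂ) :=
  Algebra.adjoin ℂ {X 1, X 0 * X 1, (X 0 : MvPolynomial (Fin 2) ℂ) ^ 2, (X 0) ^ 3}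

/-- The ideal `(w, z²)` of `ℂ[z,w]`. -/
noncomputable def cwz : Ideal (MvPolynomial (Fin 2) ℂ) :=
  Ideal.span {X 1, (X 0 : MvPolynomial (Fin 2) ℂ) ^ 2}

lemma hX1 : (X 1 : MvPolynomial (Fin 2) ℂ) ∈ Awz := Algebra.subset_adjoin (by simp)
lemma hX01 : (X 0 * X 1 : MvPolynomial (Fin 2) ℂ) ∈ Awz := Algebra.subset_adjoin (by simp)
lemma hXsq : ((X 0 : MvPolynomial (Fin 2) ℂ)^2) ∈ Awz := Algebra.subset_adjoin (by simp)
lemma hXcube : ((X 0 : MvPolynomial (Fin 2) ℂ)^3) ∈ Awz := Algebra.subset_adjoin (by simp)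

lemma hz2 : ∀ i, ((X 0 : MvPolynomial (Fin 2) ℂ))^(i+2) ∈ Awz
  | 0 => hXsq
  | 1 => hXcube
  | (i+2) => by
      have h := hz2 i
      have e : (X 0 : MvPolynomial (Fin 2) ℂ)^(i+2+2) = X 0^2 * X 0^(i+2) := by ring
      rw [e]; exact mul_mem hXsq h

lemma hz1 : ∀ i, ((X 0 : MvPolynomial (Fin 2) ℂ))^i * X 1 ∈ Awz
  | 0 => by simpa using hX1
  | 1 => by simpa using hX01
  | (i+2) => by
      have h := hz1 i
      have e : (X 0 : MvPolynomial (Fin 2) ℂ)^(i+2) * X 1 = X 0^2 * (X 0^i * X 1) := by ring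
      rw [e]; exact mul_mem hXsq h

lemma hij1 : ∀ (j i : ℕ), (X 0:MvPolynomial (Fin 2) ℂ)^i * X 1^(j+1) ∈ Awz := by
  intro j
  induction j with
  | zero => intro i; simpa using hz1 i
  | succ j ih => intro i
                 have e : (X 0:MvPolynomial (Fin 2) ℂ)^i * X 1^(j+2) = (X 0^i * X 1^(j+1)) * X 1 := by ring
                 rw [e]; exact mul_mem (ih i) hX1

lemma hij : ∀ (i j : ℕ), ¬(i = 1 ∧ j = 0) → (X 0:MvPolynomial (Fin 2) ℂ)^i * X 1^j ∈ Awz := by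
  intro i j h
  match j with
  | 0 => match i with
    | 0 => simpa using one_mem Awz
    | 1 => exact absurd ⟨rfl, rfl⟩ h
    | (k+2) => simpa using hz2 k
  | (j+1) => exact hij1 j i

lemma monomial_mem (v : Fin 2 →₀ ℕ) (c : ℂ) (hv : v ≠ Finsupp.single 0 1) :
    (monomial v c : MvPolynomial (Fin 2) ℂ) ∈ Awz := by
  have e : (monomial v c : MvPolynomial (Fin 2) ℂ) = C c * (X 0 ^ (v 0) * X 1 ^ (v 1)) := by
    rw [monomial_eq, Finsupp.prod_pow, Fin.prod_univ_two]
  rw [e]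
  refine mul_mem (Awz.algebraMap_mem c) (hij _ _ ?_)
  rintro ⟨h0, h1⟩
  apply hv
  ext i
  fin_cases i <;> simp [h0, h1]

lemma coeff_z_mul (p q : MvPolynomial (Fin 2) ℂ) :
    coeff (Finsupp.single 0 1) (p * q) =
      coeff 0 p * coeff (Finsupp.single 0 1) q + coeff (Finsupp.single 0 1) p * coeff 0 q := by
  rw [coeff_mul, Finsupp.antidiagonal_single]
  rw [show Finset.HasAntidiagonal.antidiagonal 1 = {(0,1),(1,0)} from rfl]
  simp [add_comm]

lemma A_char (p : MvPolynomial (Fin 2) ℂ) :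
    p ∈ Awz ↔ coeff (Finsupp.single 0 1) p = 0 := by
  constructor
  · intro hp
    induction hp using Algebra.adjoin_induction with
    | mem x hx =>
        rcases hx with h | h | h | h <;> subst h <;>
          simp [coeff_z_mul, coeff_X', coeff_X_pow, Finsupp.single_eq_single_iff]
    | algebraMap r => simp [algebraMap_eq, coeff_C, eq_comm, Finsupp.single_eq_zero]
    | add x y hx hy ihx ihy => simp [ihx, ihy]
    | mul x y hx hy ihx ihy => simp [coeff_z_mul, ihx, ihy]
  · intro hp
    rw [as_sum p]
    refine sum_mem fun v hv => ?_
    by_cases h : v = Finsupp.single 0 1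
    · subst h; rw [hp]; simpa using zero_mem Awz
    · exact monomial_mem v _ h

lemma X1_mem_c : (X 1 : MvPolynomial (Fin 2) ℂ) ∈ cwz := Ideal.subset_span (by simp)
lemma Xsq_mem_c : ((X 0 : MvPolynomial (Fin 2) ℂ)^2) ∈ cwz := Ideal.subset_span (by simp)

lemma c_char (p : MvPolynomial (Fin 2) ℂ) :
    p ∈ cwz ↔ coeff 0 p = 0 ∧ coeff (Finsupp.single 0 1) p = 0 := by
  constructor
  · intro hp
    induction hp using Submodule.span_induction with
    | mem x hx =>
        rcases hx with h | h <;> subst h <;>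
          constructor <;>
          simp [coeff_z_mul, coeff_X', coeff_X_pow, coeff_zero_X, eq_comm,
            Finsupp.single_eq_single_iff, Finsupp.single_eq_zero]
    | zero => simp
    | add x y hx hy ihx ihy => exact ⟨by simp [ihx.1, ihy.1], by simp [ihx.2, ihy.2]⟩
    | smul q x hx ih =>
        refine ⟨?_, ?_⟩
        · have : coeff 0 (q * x) = coeff 0 q * coeff 0 x := by
            rw [coeff_mul]; simp
          simp [smul_eq_mul, this, ih.1]
        · simp [smul_eq_mul, coeff_z_mul, ih.1, ih.2]
  · rintro ⟨h0, h1⟩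
    rw [as_sum p]
    refine sum_mem fun v hv => ?_
    have hvne : v ≠ 0 := by
      intro h; subst h; exact (mem_support_iff.mp hv) h0
    have hvne1 : v ≠ Finsupp.single 0 1 := by
      intro h; subst h; exact (mem_support_iff.mp hv) h1
    have e : (monomial v (coeff v p) : MvPolynomial (Fin 2) ℂ)
        = C (coeff v p) * (X 0 ^ (v 0) * X 1 ^ (v 1)) := by
      rw [monomial_eq, Finsupp.prod_pow, Fin.prod_univ_two]
    rw [e]
    rcases hj : v 1 with _ | m
    · have hi : ∃ k, v 0 = k + 2 := by
        rcases hi0 : v 0 with _ | _ | k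
        · exact absurd (by ext i; fin_cases i <;> simp [hi0, hj]) hvne
        · exact absurd (by ext i; fin_cases i <;> simp [hi0, hj]) hvne1
        · exact ⟨k, rfl⟩
      obtain ⟨k, hk⟩ := hi
      rw [hk]
      have e2 : C (coeff v p) * ((X 0:MvPolynomial (Fin 2) ℂ) ^ (k+2) * X 1 ^ 0)
          = (C (coeff v p) * X 0 ^ k) * X 0 ^ 2 := by ring
      rw [e2]; exact Ideal.mul_mem_left _ _ Xsq_mem_c
    · have e2 : C (coeff v p) * ((X 0:MvPolynomial (Fin 2) ℂ) ^ (v 0) * X 1 ^ (m+1))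
          = (C (coeff v p) * X 0 ^ (v 0) * X 1 ^ m) * X 1 := by ring
      rw [e2]; exact Ideal.mul_mem_left _ _ X1_mem_c

noncomputable def phi : MvPolynomial (Fin 2) ℂ →+* (Polynomial ℂ ⧸ Ideal.span {(Polynomial.X : Polynomial ℂ)^2}) :=
  (Ideal.Quotient.mk _).comp
    (aeval (fun i : Fin 2 => if i = 0 then Polynomial.X else 0) : MvPolynomial (Fin 2) ℂ →ₐ[ℂ] Polynomial ℂ).toRingHom

lemma phi_surj : Function.Surjective phi := by
  have h1 : Function.Surjective
      (aeval (fun i : Fin 2 => if i = 0 then Polynomial.X else 0) : MvPolynomial (Fin 2) ℂ →ₐ[ℂ] Polynomial ℂ) := by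
    rw [← AlgHom.range_eq_top, ← top_le_iff, ← Polynomial.adjoin_X, Algebra.adjoin_le_iff]
    rintro x rfl
    exact ⟨X 0, by simp⟩
  exact (Ideal.Quotient.mk_surjective).comp h1

lemma cwz_le_ker : cwz ≤ RingHom.ker phi := by
  rw [cwz, Ideal.span_le]
  rintro x (rfl | rfl) <;>
    simp [RingHom.mem_ker, phi, Ideal.Quotient.eq_zero_iff_mem, Ideal.mem_span_singleton]

lemma ker_phi : RingHom.ker phi = cwz := by
  refine le_antisymm ?_ cwz_le_ker
  intro p hp
  set c₀ := coeff 0 p with hc₀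
  set c₁ := coeff (Finsupp.single 0 1) p with hc₁
  have hr : p - C c₀ - C c₁ * X 0 ∈ cwz := by
    rw [c_char]
    constructor
    · simp [coeff_zero_X, coeff_C, hc₀]
    · simp [coeff_C, coeff_X', Finsupp.single_eq_zero, eq_comm, hc₁]
  have hφr : phi (p - C c₀ - C c₁ * X 0) = 0 := cwz_le_ker hr
  have hφp : phi p = 0 := hp
  have h2 : phi (C c₀ + C c₁ * X 0) = 0 := by
    have := hφr
    rw [map_sub, map_sub, hφp] at this
    rw [map_add]
    linear_combination -this
  have h3 : (Polynomial.C c₀ + Polynomial.C c₁ * Polynomial.X) ∈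
      Ideal.span {(Polynomial.X : Polynomial ℂ)^2} := by
    rw [← Ideal.Quotient.eq_zero_iff_mem]
    simpa [phi, algebraMap_eq] using h2
  rw [Ideal.mem_span_singleton] at h3
  obtain ⟨q, hq⟩ := h3
  have e0 : (Polynomial.X^2 * q).coeff 0 = 0 := by
    rw [mul_comm, Polynomial.coeff_mul_X_pow']; simp
  have e1 : (Polynomial.X^2 * q).coeff 1 = 0 := by
    rw [mul_comm, Polynomial.coeff_mul_X_pow']; simp
  have h0 : c₀ = 0 := by
    have := congrArg (fun f => Polynomial.coeff f 0) hq
    simp only [Polynomial.coeff_add, Polynomial.coeff_C, Polynomial.coeff_C_mul,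
      Polynomial.coeff_X_zero, e0] at this
    simpa using this
  have h1 : c₁ = 0 := by
    have := congrArg (fun f => Polynomial.coeff f 1) hq
    simp only [Polynomial.coeff_add, Polynomial.coeff_C, Polynomial.coeff_C_mul,
      Polynomial.coeff_X_one, e1] at this
    simpa using this
  have : p = p - C c₀ - C c₁ * X 0 := by rw [h0, h1]; simp
  rw [this]; exact hr

noncomputable def psi : Awz →+* ℂ := constantCoeff.comp Awz.val.toRingHom

lemma psi_surj : Function.Surjective psi := by
  intro c
  exact ⟨⟨C c, Awz.algebraMap_mem c⟩, by simp [psi]⟩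

lemma ker_psi : RingHom.ker psi = cwz.comap Awz.val := by
  ext a
  have ha : coeff (Finsupp.single 0 1) (a : MvPolynomial (Fin 2) ℂ) = 0 := (A_char _).mp a.2
  simp [RingHom.mem_ker, Ideal.mem_comap, c_char, psi, ha, constantCoeff_eq]

/-- The conductor of `A = ℂ[w, zw, z², z³]` in `ℂ[z,w]` is the ideal generated by
`w` and `z²`, with `ℂ[z,w]/𝔠 ≅ ℂ[z]/(z²)` and `A/𝔠 ≅ ℂ`. -/
theorem conductor_wz :
    (∀ p : MvPolynomial (Fin 2) ℂ,
        (p ∈ Awz ∧ ∀ q : MvPolynomial (Fin 2) ℂ, p * q ∈ Awz) ↔ p ∈ cwz) ∧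
    Nonempty ((MvPolynomial (Fin 2) ℂ ⧸ cwz) ≃+*
        (Polynomial ℂ ⧸ Ideal.span {(Polynomial.X : Polynomial ℂ) ^ 2})) ∧
    Nonempty ((Awz ⧸ cwz.comap Awz.val) ≃+* ℂ) := by
  refine ⟨?_, ?_, ?_⟩
  · intro p
    constructor
    · rintro ⟨hA, hall⟩
      rw [c_char]
      have h1 : coeff (Finsupp.single 0 1) p = 0 := (A_char _).mp hA
      have h2 := (A_char _).mp (hall (X 0))
      rw [coeff_z_mul] at h2
      simp [coeff_X', coeff_zero_X, h1] at h2
      exact ⟨h2, h1⟩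
    · intro hp
      obtain ⟨h0, h1⟩ := (c_char p).mp hp
      refine ⟨(A_char p).mpr h1, fun q => (A_char _).mpr ?_⟩
      rw [coeff_z_mul, h0, h1]; ring
  · exact ⟨(Ideal.quotEquivOfEq ker_phi.symm).trans (RingHom.quotientKerEquivOfSurjective phi_surj)⟩
  · exact ⟨(Ideal.quotEquivOfEq ker_psi.symm).trans (RingHom.quotientKerEquivOfSurjective psi_surj)⟩
end

section
/- Let R = ℂ[z]/(z⁴), A' = {a + bz² : a,b ∈ ℂ} ⊆ R. Two units u₁ = α₁ + β₁z + γ₁z² + δ₁z³ and u₂ = α₂ + β₂z + γ₂z² + δ₂z³ of R lie in the same orbit of the multiplication action of (A')ˣ if and only if β₁/α₁ = β₂/α₂ and (δ₁α₁ − γ₁β₁)/α₁² = (δ₂α₂ − γ₂β₂)/α₂². -/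
open Polynomial

/-- The ring `R = ℂ[z]/(z⁴)`. -/
noncomputable abbrev Rz4 : Type := Polynomial ℂ ⧸ Ideal.span {(X : Polynomial ℂ) ^ 4}

/-- The quotient map `ℂ[z] → ℂ[z]/(z⁴)`. -/
noncomputable abbrev πz4 : Polynomial ℂ →+* Rz4 :=
  Ideal.Quotient.mk (Ideal.span {(X : Polynomial ℂ) ^ 4})

/-- The subalgebra `A' = {a + b z²} ⊆ R`. -/
noncomputable def A'z4 : Subalgebra ℂ Rz4 :=
  Algebra.adjoin ℂ {πz4 ((X : Polynomial ℂ) ^ 2)}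

noncomputable def cub (α β γ δ : ℂ) : Rz4 :=
  πz4 (C α + C β * X + C γ * X ^ 2 + C δ * X ^ 3)

lemma z4_zero : πz4 ((X : Polynomial ℂ) ^ 4) = 0 :=
  Ideal.Quotient.eq_zero_iff_mem.2 (Ideal.subset_span rfl)

lemma mul_cub (a b α β γ δ : ℂ) :
    πz4 (C a + C b * X ^ 2) * cub α β γ δ =
      cub (a * α) (a * β) (a * γ + b * α) (a * δ + b * β) := by
  have key : (C a + C b * X ^ 2) * (C α + C β * X + C γ * X ^ 2 + C δ * X ^ 3) =
      (C (a*α) + C (a*β) * X + C (a*γ + b*α) * X ^ 2 + C (a*δ + b*β) * X ^ 3)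
        + (C (b*γ) + C (b*δ) * X) * X ^ 4 := by
    simp only [C_add, C_mul]; ring
  have hz : πz4 ((C (b*γ) + C (b*δ) * X) * X ^ 4) = 0 := by
    rw [map_mul, z4_zero, mul_zero]
  rw [cub, cub, ← map_mul, key, map_add, hz, add_zero]

lemma cub_inj {α β γ δ α' β' γ' δ' : ℂ} (h : cub α β γ δ = cub α' β' γ' δ') :
    α = α' ∧ β = β' ∧ γ = γ' ∧ δ = δ' := by
  rw [cub, cub, Ideal.Quotient.eq, Ideal.mem_span_singleton] at h
  rw [X_pow_dvd_iff] at h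
  have h0 := h 0 (by norm_num)
  have hb1 := h 1 (by norm_num)
  have hc2 := h 2 (by norm_num)
  have hd3 := h 3 (by norm_num)
  simp [coeff_sub, coeff_add, coeff_C_mul, coeff_X_pow, coeff_C, sub_eq_zero] at h0 hb1 hc2 hd3
  exact ⟨h0, hb1, hc2, hd3⟩

lemma mem_A' (a b : ℂ) : πz4 (C a + C b * X ^ 2) ∈ A'z4 := by
  have h1 : πz4 ((X : Polynomial ℂ) ^ 2) ∈ A'z4 := Algebra.subset_adjoin rfl
  have h2 : πz4 (C a) = algebraMap ℂ Rz4 a := rfl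
  have h3 : πz4 (C b) = algebraMap ℂ Rz4 b := rfl
  rw [map_add, map_mul, h2, h3]
  exact add_mem (A'z4.algebraMap_mem a) (mul_mem (A'z4.algebraMap_mem b) h1)

lemma A'_repr {x : Rz4} (hx : x ∈ A'z4) : ∃ a b : ℂ, x = πz4 (C a + C b * X ^ 2) := by
  induction hx using Algebra.adjoin_induction with
  | mem y hy =>
      rcases hy with rfl
      exact ⟨0, 1, by simp⟩
  | algebraMap r => exact ⟨r, 0, by simp; rfl⟩
  | add x y hx hy ihx ihy =>
      obtain ⟨a, b, rfl⟩ := ihx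
      obtain ⟨c, d, rfl⟩ := ihy
      exact ⟨a + c, b + d, by rw [← map_add]; congr 1; simp only [C_add]; ring⟩
  | mul x y hx hy ihx ihy =>
      obtain ⟨a, b, rfl⟩ := ihx
      obtain ⟨c, d, rfl⟩ := ihy
      refine ⟨a * c, a * d + b * c, ?_⟩
      rw [← map_mul]
      have : (C a + C b * X ^ 2) * (C c + C d * X ^ 2) =
          (C (a*c) + C (a*d + b*c) * X ^ 2) + C (b*d) * X ^ 4 := by
        simp only [C_add, C_mul]; ring
      have hz : πz4 (C (b*d) * X ^ 4) = 0 := by rw [map_mul, z4_zero, mul_zero]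
      rw [this, map_add, hz, add_zero]

/-- Two units `u₁ = α₁ + β₁z + γ₁z² + δ₁z³` and `u₂ = α₂ + β₂z + γ₂z² + δ₂z³` of
`R = ℂ[z]/(z⁴)` lie in the same orbit of the multiplication action of `(A')ˣ` iff
`β₁/α₁ = β₂/α₂` and `(δ₁α₁ − γ₁β₁)/α₁² = (δ₂α₂ − γ₂β₂)/α₂²`. -/
theorem orbit_iff (α₁ β₁ γ₁ δ₁ α₂ β₂ γ₂ δ₂ : ℂ) (h₁ : α₁ ≠ 0) (h₂ : α₂ ≠ 0) :
    (∃ v : (A'z4)ˣ,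
        ((v : A'z4) : Rz4) * πz4 (C α₁ + C β₁ * X + C γ₁ * X ^ 2 + C δ₁ * X ^ 3) =
          πz4 (C α₂ + C β₂ * X + C γ₂ * X ^ 2 + C δ₂ * X ^ 3)) ↔
      (β₁ / α₁ = β₂ / α₂ ∧
        (δ₁ * α₁ - γ₁ * β₁) / α₁ ^ 2 = (δ₂ * α₂ - γ₂ * β₂) / α₂ ^ 2) := by
  constructor
  · rintro ⟨v, hv⟩
    obtain ⟨a, b, hab⟩ := A'_repr (v : A'z4).2
    rw [hab] at hv
    have hv' : cub (a*α₁) (a*β₁) (a*γ₁+b*α₁) (a*δ₁+b*β₁) = cub α₂ β₂ γ₂ δ₂ := by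
      rw [← mul_cub]; exact hv
    obtain ⟨e0, e1, e2, e3⟩ := cub_inj hv'
    have ha : a ≠ 0 := fun h => h₂ (by rw [← e0, h, zero_mul])
    subst e0 e1 e2 e3
    constructor
    · field_simp
    · field_simp
      ring
  · rintro ⟨hβ, hδ⟩
    have hβ' : β₁ * α₂ = β₂ * α₁ := by
      rw [div_eq_div_iff h₁ h₂] at hβ; linear_combination hβ
    have hδ' : (δ₁ * α₁ - γ₁ * β₁) * α₂ ^ 2 = (δ₂ * α₂ - γ₂ * β₂) * α₁ ^ 2 := by
      field_simp at hδ; linear_combination hδ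
    set a := α₂ / α₁ with hadef
    set b := (γ₂ * α₁ - α₂ * γ₁) / α₁ ^ 2 with hbdef
    have ha : a ≠ 0 := div_ne_zero h₂ h₁
    have hainv : a * a⁻¹ = 1 := mul_inv_cancel₀ ha
    -- the unit
    have hone : cub 1 0 0 0 = 1 := by
      rw [cub]; simp
    have hval_inv : πz4 (C a + C b * X ^ 2) * πz4 (C a⁻¹ + C (-b / a ^ 2) * X ^ 2) = 1 := by
      have h2' : πz4 (C a⁻¹ + C (-b / a ^ 2) * X ^ 2) = cub a⁻¹ 0 (-b / a ^ 2) 0 := by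
        rw [cub]; congr 1; simp only [C_0]; ring
      rw [h2', mul_cub]
      have hz : a * (-b / a ^ 2) + b * a⁻¹ = 0 := by field_simp; ring
      rw [hz, hainv]
      simpa using hone
    have hinv_val : πz4 (C a⁻¹ + C (-b / a ^ 2) * X ^ 2) * πz4 (C a + C b * X ^ 2) = 1 := by
      rw [mul_comm]; exact hval_inv
    refine ⟨⟨⟨_, mem_A' a b⟩, ⟨_, mem_A' a⁻¹ (-b / a ^ 2)⟩,
      Subtype.ext (by simpa using hval_inv), Subtype.ext (by simpa using hinv_val)⟩, ?_⟩
    show πz4 (C a + C b * X ^ 2) * _ = _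
    rw [show πz4 (C α₁ + C β₁ * X + C γ₁ * X ^ 2 + C δ₁ * X ^ 3) = cub α₁ β₁ γ₁ δ₁ from rfl,
      mul_cub]
    rw [show πz4 (C α₂ + C β₂ * X + C γ₂ * X ^ 2 + C δ₂ * X ^ 3) = cub α₂ β₂ γ₂ δ₂ from rfl]
    congr 1
    · rw [hadef]; field_simp
    · rw [hadef]; field_simp; linear_combination hβ'
    · rw [hadef, hbdef]; field_simp; ring
    · have eδ : α₂ * (α₂ * δ₁ * α₁ + (γ₂ * α₁ - α₂ * γ₁) * β₁) = α₂ * (δ₂ * α₁ ^ 2) := by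
        linear_combination hδ' + γ₂ * α₁ * hβ'
      have eδ' := mul_left_cancel₀ h₂ eδ
      apply mul_right_cancel₀ (pow_ne_zero 2 h₁)
      rw [← eδ', hadef, hbdef]
      field_simp
end
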